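/- arXiv:1406.6326 — 12 statements merged into one kernel-verified Lean document; each statement's English description precedes it below -/
import Mathlib

section
/- MI2 (slicing off the k₁ = k face): For all integers n ≥ 1, β ≥ 1, and δ ≥ 2, the multiset identity S(n+1, 0, β−1, 1, δ−1, 0, 0) = S(n+1, β−1, β−1, 1, δ−2, 0, 0) ⊎ S(n+1, 0, β−1, 1, δ−1, 1, 0) holds. -/
/-- Multiset of sums `k₁ + ⋯ + k_m` over integer chains `0 ≤ k_m ≤ ⋯ ≤ k₁ ≤ top`
(for `m = 0` the only chain is empty, with sum `0`). -/
noncomputable def chainZ : ℕ → ℤ → Multiset ℤ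
  | 0, _ => {0}
  | m + 1, top => (Finset.Icc 0 top).val.bind fun v => (chainZ m v).map (· + v)

/-- The simplicial multiset `S(n, α, β, γ, δ, ε, ζ)`: the multiset of integers
`α + β*k + k₁ + ⋯ + k_{n-1}` over all integer tuples `(k, k₁, …, k_{n-1})` with
`γ - 1 ≤ k ≤ δ - 1`, `ε*k ≤ k₁ ≤ k - ζ`, and `0 ≤ k_{m+1} ≤ k_m` for `1 ≤ m ≤ n - 2`;
for `n = 1` the elements are just `α + β*k`.  Empty ranges give the empty multiset. -/
noncomputable def simplexMS (n : ℕ) (α β γ δ ε ζ : ℤ) : Multiset ℤ :=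
  (Finset.Icc (γ - 1) (δ - 1)).val.bind fun k =>
    if n = 1 then {α + β * k}
    else (Finset.Icc (ε * k) (k - ζ)).val.bind fun k₁ =>
      (chainZ (n - 2) k₁).map fun t => α + β * k + k₁ + t

lemma icc_cons (d : ℤ) (hd : 0 ≤ d + 1) :
    (Finset.Icc (0:ℤ) (d+1)).val = (d+1) ::ₘ (Finset.Icc (0:ℤ) d).val := by
  have : Finset.Icc (0:ℤ) (d+1) = insert (d+1) (Finset.Icc 0 d) := by
    ext x; simp [Finset.mem_Icc]; omega
  rw [this, Finset.insert_val, Multiset.ndinsert_of_notMem]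
  simp

lemma key (f : ℤ → ℤ → Multiset ℤ) : ∀ e : ℕ,
    (Finset.Icc (0:ℤ) (e:ℤ)).val.bind (fun k => (Finset.Icc 0 k).val.bind (f k)) =
      (Finset.Icc (0:ℤ) ((e:ℤ)-1)).val.bind
          (fun k => (Finset.Icc 0 k).val.bind (fun k₁ => f (k+1) k₁)) +
        (Finset.Icc (0:ℤ) (e:ℤ)).val.bind (fun k => f k k) := by
  intro e
  induction e with
  | zero => simp [Finset.Icc_self]
  | succ d ih =>
      push_cast
      rw [icc_cons (d:ℤ) (by positivity), Multiset.cons_bind, Multiset.cons_bind, ih,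
        show ((d:ℤ) + 1 - 1) = (d:ℤ) by ring]
      rcases Nat.eq_zero_or_pos d with h | h
      · subst h
        rw [show ((0:ℕ):ℤ) = 0 by norm_num, show ((0:ℤ)+1) = 0+1 by norm_num,
          icc_cons 0 (by norm_num)]
        simp [Finset.Icc_self, Multiset.cons_bind]
        abel
      · have h2 : (d:ℤ) = ((d:ℤ) - 1) + 1 := by ring
        rw [h2, icc_cons ((d:ℤ)-1) (by omega), Multiset.cons_bind,
          show ((d:ℤ) - 1 + 1) = (d:ℤ) by ring, icc_cons (d:ℤ) (by positivity),
          Multiset.cons_bind]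
        simp only [Multiset.cons_bind]
        abel

/-- MI2 (slicing off the `k₁ = k` face):
`S(n+1,0,β-1,1,δ-1,0,0) = S(n+1,β-1,β-1,1,δ-2,0,0) ⊎ S(n+1,0,β-1,1,δ-1,1,0)`. -/
theorem MI2 (n : ℕ) (β δ : ℤ) (hn : 1 ≤ n) (hβ : 1 ≤ β) (hδ : 2 ≤ δ) :
    simplexMS (n + 1) 0 (β - 1) 1 (δ - 1) 0 0 =
      simplexMS (n + 1) (β - 1) (β - 1) 1 (δ - 2) 0 0 +
        simplexMS (n + 1) 0 (β - 1) 1 (δ - 1) 1 0 := by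
  have hn1 : n + 1 ≠ 1 := by omega
  set f : ℤ → ℤ → Multiset ℤ :=
    fun k k₁ => (chainZ (n + 1 - 2) k₁).map (fun t => 0 + (β - 1) * k + k₁ + t) with hf
  have hd : (((δ - 2).toNat : ℤ)) = δ - 2 := by omega
  have hkey := key f (δ - 2).toNat
  rw [hd] at hkey
  simp only [simplexMS, if_neg hn1, zero_mul, one_mul, sub_zero,
    show (1:ℤ) - 1 = 0 from by norm_num, show δ - 1 - 1 = δ - 2 from by ring,
    Finset.Icc_self, Finset.singleton_val, Multiset.singleton_bind]
  rw [show (δ - 2 - 1 : ℤ) = (δ - 2) - 1 from rfl] at hkey ⊢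
  rw [hkey]
  congr 1
  apply Multiset.bind_congr
  intro k _
  apply Multiset.bind_congr
  intro k₁ _
  apply Multiset.map_congr rfl
  intro t _
  ring
end

section
/- MI3 (dimension-raising identity): For all integers n ≥ 1, β ≥ 1, and δ ≥ 2, the multiset identity S(n, 0, β, 1, δ−1, 0, 0) = S(n+1, 0, β−1, 1, δ−1, 1, 0) holds. -/
/-- MI3 (dimension-raising identity): `S(n,0,β,1,δ-1,0,0) = S(n+1,0,β-1,1,δ-1,1,0)`. -/
theorem MI3 (n : ℕ) (β δ : ℤ) (hn : 1 ≤ n) (hβ : 1 ≤ β) (hδ : 2 ≤ δ) :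
    simplexMS n 0 β 1 (δ - 1) 0 0 = simplexMS (n + 1) 0 (β - 1) 1 (δ - 1) 1 0 := by
  unfold simplexMS
  refine Multiset.bind_congr (fun k hk => ?_)
  have hIcc : (Finset.Icc (1 * k) (k - 0)).val = {k} := by
    simp [Finset.Icc_self]
  rcases Nat.lt_or_ge n 2 with h | h
  · interval_cases n
    simp only [if_pos rfl, if_neg (by norm_num : ¬ (1 + 1 = 1)), hIcc,
      Multiset.singleton_bind]
    show _ = (chainZ 0 k).map _
    simp [chainZ]
    ring
  · obtain ⟨m, rfl⟩ : ∃ m, n = m + 2 := ⟨n - 2, by omega⟩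
    simp only [if_neg (by omega : ¬ (m + 2 = 1)), if_neg (by omega : ¬ (m + 2 + 1 = 1)),
      hIcc, Multiset.singleton_bind]
    have h2 : m + 2 + 1 - 2 = m + 1 := rfl
    rw [h2]
    show _ = ((Finset.Icc 0 k).val.bind fun v => (chainZ m v).map (· + v)).map _
    rw [Multiset.map_bind]
    simp only [zero_mul, sub_zero]
    refine Multiset.bind_congr fun v hv => ?_
    rw [Multiset.map_map]
    exact Multiset.map_congr rfl fun t _ => by simp; ring
end

section
/- MI4 (face reparametrization): For all integers n ≥ 1, β ≥ 1, and δ ≥ 1, the multiset identity S(n, 0, β, δ, δ, 0, 0) = S(n, (β−1)(δ−1), 1, δ, δ, 0, 0) holds. -/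
/-- MI4 (face reparametrization): `S(n,0,β,δ,δ,0,0) = S(n,(β-1)(δ-1),1,δ,δ,0,0)`. -/
theorem MI4 (n : ℕ) (β δ : ℤ) (hn : 1 ≤ n) (hβ : 1 ≤ β) (hδ : 1 ≤ δ) :
    simplexMS n 0 β δ δ 0 0 = simplexMS n ((β - 1) * (δ - 1)) 1 δ δ 0 0 := by
  unfold simplexMS
  rw [Finset.Icc_self]
  simp only [Finset.singleton_val, Multiset.singleton_bind]
  split_ifs
  · congr 1; ring
  · congr 1
    funext k₁
    congr 1
    funext t
    ring
end

section
/- MI5 (dimension-lowering identity): For all integers n ≥ 1, β ≥ 1, and δ ≥ 2, the multiset identity S(n+1, β−1, β−1, δ−1, δ−1, 0, 0) = S(n, (β−1)(δ−1), 1, 1, δ−1, 0, 0) holds. -/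
lemma chain_key (m : ℕ) (c : ℤ) (s : Multiset ℤ) :
    (s.bind fun k => (chainZ (m + 1) k).map fun t => c + k + t)
      = s.bind fun k => (Finset.Icc 0 k).val.bind fun k₁ =>
          (chainZ m k₁).map fun t => c + k + k₁ + t := by
  refine Multiset.bind_congr fun k hk => ?_
  rw [chainZ, Multiset.map_bind]
  refine Multiset.bind_congr fun v hv => ?_
  rw [Multiset.map_map]
  refine Multiset.map_congr rfl fun t ht => ?_
  simp only [Function.comp_apply]
  ring

/-- MI5 (dimension-lowering identity):
`S(n+1,β-1,β-1,δ-1,δ-1,0,0) = S(n,(β-1)(δ-1),1,1,δ-1,0,0)`. -/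
theorem MI5 (n : ℕ) (β δ : ℤ) (hn : 1 ≤ n) (hβ : 1 ≤ β) (hδ : 2 ≤ δ) :
    simplexMS (n + 1) (β - 1) (β - 1) (δ - 1) (δ - 1) 0 0 =
      simplexMS n ((β - 1) * (δ - 1)) 1 1 (δ - 1) 0 0 := by
  obtain ⟨m, rfl⟩ : ∃ m, n = m + 1 := ⟨n - 1, by omega⟩
  simp only [simplexMS, Finset.Icc_self, Finset.singleton_val,
    Multiset.singleton_bind, zero_mul, sub_zero]
  norm_num
  cases m with
  | zero =>
    simp only [chainZ, Multiset.map_singleton, ↓reduceIte]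
    refine Multiset.bind_congr fun k hk => ?_
    show Multiset.map _ ({0} : Multiset ℤ) = _
    rw [Multiset.map_singleton]
    congr 1
    ring
  | succ m =>
    have h2 : m + 1 + 1 + 1 - 2 = m + 1 := rfl
    have h3 : m + 1 + 1 - 2 = m := rfl
    rw [h2, h3]
    have key := chain_key m (β - 1 + (β - 1) * (δ - 1 - 1)) (Finset.Icc 0 (δ - 1 - 1)).val
    rw [show (fun k₁ => (chainZ (m + 1) k₁).map fun t => β - 1 + (β - 1) * (δ - 1 - 1) + k₁ + t)
        = fun k => (chainZ (m + 1) k).map fun t => β - 1 + (β - 1) * (δ - 1 - 1) + k + t from rfl,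
      key]
    refine Multiset.bind_congr fun k hk => ?_
    refine Multiset.bind_congr fun k₁ hk₁ => ?_
    refine Multiset.map_congr rfl fun t ht => ?_
    ring
end

section
/- MI6 (inter-dimensional simplex duality): For all integers n ≥ 1, β ≥ 1, and δ ≥ 1, the multiset identity S(n, 0, β, 1, δ, 0, 0) ⊎ S(n+1, β−1, β−1, 1, δ−1, 0, 0) = S(n+1, 0, β−1, 1, δ−1, 0, 0) ⊎ S(n, (β−1)(δ−1), 1, 1, δ, 0, 0) holds. -/
/-- Auxiliary: `B m β δ` is the multiset of `β*k + (chain sums of length m below k)`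
for `0 ≤ k ≤ δ - 1`. -/
noncomputable def auxB (m : ℕ) (β δ : ℤ) : Multiset ℤ :=
  (Finset.Icc 0 (δ - 1)).val.bind fun k => (chainZ m k).map fun t => β * k + t

lemma Icc_val_split (a b : ℤ) (h : a ≤ b) :
    (Finset.Icc a b).val = b ::ₘ (Finset.Icc a (b - 1)).val := by
  have h1 : Finset.Icc a b = insert b (Finset.Icc a (b - 1)) := by
    ext x; simp only [Finset.mem_Icc, Finset.mem_insert]; omega
  have h2 : b ∉ Finset.Icc a (b - 1) := by simp [Finset.mem_Icc]
  rw [h1, Finset.insert_val_of_notMem h2]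

lemma Icc_val_empty (a b : ℤ) (h : b < a) : (Finset.Icc a b).val = 0 := by
  rw [Finset.Icc_eq_empty (by omega)]; rfl

lemma chainZ_top_zero (m : ℕ) : chainZ m 0 = {0} := by
  induction m with
  | zero => rfl
  | succ m ih =>
      show (Finset.Icc (0:ℤ) 0).val.bind _ = _
      rw [Icc_val_split 0 0 le_rfl, Icc_val_empty 0 (0-1) (by omega)]
      simp [ih]

lemma chainZ_neg (m : ℕ) (t : ℤ) (ht : t < 0) : chainZ (m + 1) t = 0 := by
  show (Finset.Icc (0:ℤ) t).val.bind _ = _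
  rw [Icc_val_empty 0 t ht]; rfl

lemma chainZ_split (m : ℕ) (t : ℤ) (ht : 0 ≤ t) :
    chainZ (m + 1) t = (chainZ m t).map (· + t) + chainZ (m + 1) (t - 1) := by
  show (Finset.Icc (0:ℤ) t).val.bind _ = _
  rw [Icc_val_split 0 t ht, Multiset.cons_bind]
  rfl

lemma auxB_nonpos (m : ℕ) (β δ : ℤ) (hδ : δ ≤ 0) : auxB m β δ = 0 := by
  unfold auxB
  rw [Icc_val_empty 0 (δ - 1) (by omega)]; rfl

lemma auxB_split (m : ℕ) (β t : ℤ) (ht : 1 ≤ t) :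
    auxB m β t = (chainZ m (t - 1)).map (fun x => β * (t - 1) + x) + auxB m β (t - 1) := by
  unfold auxB
  rw [Icc_val_split 0 (t - 1) (by omega), Multiset.cons_bind]

/-- `chainZ (m+1) (δ-1)` as a bind (definitional, plus commuting the addition). -/
lemma chainZ_as_bind (m : ℕ) (c δ : ℤ) :
    (chainZ (m + 1) (δ - 1)).map (fun x => c + x)
      = (Finset.Icc 0 (δ - 1)).val.bind fun k =>
          (chainZ m k).map fun t => c + 1 * k + t := by
  show Multiset.map _ ((Finset.Icc (0:ℤ) (δ-1)).val.bind fun v => (chainZ m v).map (· + v)) = _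
  rw [Multiset.map_bind]
  apply Multiset.bind_congr
  intro v _
  rw [Multiset.map_map]
  apply Multiset.map_congr rfl
  intro x _
  simp only [Function.comp]
  ring

/-- Rearrangement helper. -/
lemma rearr (A1 A2 A3 A4 B1 B2 : Multiset ℤ) (h : A2 + A4 = B2 + B1) :
    A1 + A2 + (A3 + A4) = B1 + B2 + (A1 + A3) := by
  rw [show A1 + A2 + (A3 + A4) = (A2 + A4) + (A1 + A3) from by abel, h]
  abel

/-- The key identity, by induction on `δ`. -/
lemma key_s5 (m : ℕ) (β δ : ℤ) (hδ : 1 ≤ δ) :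
    auxB m β δ + (auxB (m + 1) (β - 1) (δ - 1)).map (fun x => (β - 1) + x)
      = auxB (m + 1) (β - 1) (δ - 1)
          + (chainZ (m + 1) (δ - 1)).map (fun x => (β - 1) * (δ - 1) + x) := by
  refine Int.le_induction (motive := fun δ _ =>
      auxB m β δ + (auxB (m + 1) (β - 1) (δ - 1)).map (fun x => (β - 1) + x)
        = auxB (m + 1) (β - 1) (δ - 1)
            + (chainZ (m + 1) (δ - 1)).map (fun x => (β - 1) * (δ - 1) + x))
    ?_ (fun δ hδ ih => ?_) δ hδ
  · beta_reduce
    rw [auxB_nonpos (m+1) (β-1) (1-1) (by omega)]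
    unfold auxB
    rw [Icc_val_split 0 (1-1) (by omega), Icc_val_empty 0 (1-1-1) (by omega)]
    simp [chainZ_top_zero]
  · beta_reduce
    beta_reduce at ih
    have e1 : δ + 1 - 1 = δ := by ring
    rw [e1, auxB_split m β (δ+1) (by omega), e1,
        auxB_split (m+1) (β-1) δ hδ, chainZ_split m δ (by omega),
        Multiset.map_add, Multiset.map_add, Multiset.map_map, Multiset.map_map]
    have c1 : ((chainZ (m+1) (δ-1)).map
        ((fun x => (β-1) + x) ∘ fun x => (β-1) * (δ-1) + x))
        = (chainZ (m+1) (δ-1)).map (fun x => (β-1) * δ + x) := by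
      apply Multiset.map_congr rfl; intro x _; simp only [Function.comp]; ring
    have c2 : ((chainZ m δ).map ((fun x => (β-1) * δ + x) ∘ (· + δ)))
        = (chainZ m δ).map (fun x => β * δ + x) := by
      apply Multiset.map_congr rfl; intro x _; simp only [Function.comp]; ring
    rw [c1, c2]
    exact rearr _ _ _ _ _ _ ih

/-- Every `simplexMS` with `γ = 1, ε = ζ = 0` is an `auxB` up to a shift. -/
lemma simplexMS_eq_auxB (n : ℕ) (hn : 1 ≤ n) (α β δ : ℤ) :
    simplexMS n α β 1 δ 0 0
      = (Finset.Icc 0 (δ - 1)).val.bind fun k =>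
          (chainZ (n - 1) k).map fun t => α + β * k + t := by
  unfold simplexMS
  have h0 : (1:ℤ) - 1 = 0 := by ring
  rw [h0]
  apply Multiset.bind_congr
  intro k hk
  rcases Nat.exists_eq_add_of_le hn with ⟨p, hp⟩
  subst hp
  cases p with
  | zero =>
      simp only [if_pos rfl]
      show ({α + β * k} : Multiset ℤ) = (chainZ 0 k).map _
      show _ = Multiset.map _ {0}
      rw [Multiset.map_singleton]
      congr 1; ring
  | succ p =>
      have hne : 1 + (p + 1) ≠ 1 := by omega
      rw [if_neg hne]
      have h1 : 1 + (p + 1) - 1 = p + 1 := by omega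
      have h2 : 1 + (p + 1) - 2 = p := by omega
      rw [h1, h2]
      show _ = Multiset.map _ (chainZ (p+1) k)
      show _ = Multiset.map _ ((Finset.Icc (0:ℤ) k).val.bind fun v => (chainZ p v).map (· + v))
      rw [Multiset.map_bind]
      have h3 : (0:ℤ) * k = 0 := by ring
      have h4 : k - 0 = k := by ring
      rw [h3, h4]
      apply Multiset.bind_congr
      intro v _
      rw [Multiset.map_map]
      apply Multiset.map_congr rfl
      intro x _
      simp only [Function.comp]
      ring

lemma simplexMS_eq_auxB' (n : ℕ) (hn : 1 ≤ n) (α β δ : ℤ) :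
    simplexMS n α β 1 δ 0 0 = (auxB (n - 1) β δ).map (fun x => α + x) := by
  rw [simplexMS_eq_auxB n hn, auxB, Multiset.map_bind]
  apply Multiset.bind_congr
  intro k _
  rw [Multiset.map_map]
  apply Multiset.map_congr rfl
  intro x _
  simp only [Function.comp]
  ring

/-- MI6 (inter-dimensional simplex duality):
`S(n,0,β,1,δ,0,0) ⊎ S(n+1,β-1,β-1,1,δ-1,0,0)
  = S(n+1,0,β-1,1,δ-1,0,0) ⊎ S(n,(β-1)(δ-1),1,1,δ,0,0)`. -/
theorem MI6 (n : ℕ) (β δ : ℤ) (hn : 1 ≤ n) (hβ : 1 ≤ β) (hδ : 1 ≤ δ) :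
    simplexMS n 0 β 1 δ 0 0 + simplexMS (n + 1) (β - 1) (β - 1) 1 (δ - 1) 0 0 =
      simplexMS (n + 1) 0 (β - 1) 1 (δ - 1) 0 0 +
        simplexMS n ((β - 1) * (δ - 1)) 1 1 δ 0 0 := by
  rcases Nat.exists_eq_add_of_le hn with ⟨p, hp⟩
  subst hp
  have h1 : 1 + p - 1 = p := by omega
  have h2 : 1 + p + 1 - 1 = p + 1 := by omega
  rw [simplexMS_eq_auxB' (1+p) hn 0 β δ,
      simplexMS_eq_auxB' (1+p+1) (by omega) (β-1) (β-1) (δ-1),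
      simplexMS_eq_auxB' (1+p+1) (by omega) 0 (β-1) (δ-1),
      simplexMS_eq_auxB (1+p) hn ((β-1)*(δ-1)) 1 δ,
      h1, h2]
  have hz : ∀ s : Multiset ℤ, s.map (fun x => (0:ℤ) + x) = s := by
    intro s
    have : (fun x => (0:ℤ) + x) = id := by funext x; simp
    rw [this, Multiset.map_id]
  rw [hz, hz, ← chainZ_as_bind p ((β-1)*(δ-1)) δ]
  exact key_s5 p β δ hδ
end

section
/- Generating-function form of the inter-dimensional simplex duality MI6: For every commutative ring R, every x ∈ R, and all integers n ≥ 1, β ≥ 1, δ ≥ 1, the following identity holds: the sum of x^{βk + k₁ + ⋯ + k_{n−1}} over all integer tuples with 0 ≤ k_{n−1} ≤ ⋯ ≤ k₁ ≤ k ≤ δ−1, plus the sum of x^{(β−1)(k+1) + k₁ + ⋯ + k_n} over all integer tuples with 0 ≤ k_n ≤ ⋯ ≤ k₁ ≤ k ≤ δ−2, equals the sum of x^{(β−1)k + k₁ + ⋯ + k_n} over all integer tuples with 0 ≤ k_n ≤ ⋯ ≤ k₁ ≤ k ≤ δ−2, plus the sum of x^{(β−1)(δ−1) + k + k₁ + ⋯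 + k_{n−1}} over all integer tuples with 0 ≤ k_{n−1} ≤ ⋯ ≤ k₁ ≤ k ≤ δ−1. (For n = 1 the tuples in the first and last sums consist of k alone, and the middle sums are over pairs (k, k₁).) -/
/-- `chainSum x m top = ∑ x^(k₁+⋯+k_m)` over integer chains `0 ≤ k_m ≤ ⋯ ≤ k₁ ≤ top`
(for `m = 0` the sum is `1 = x^0`, over the unique empty chain). -/
def chainSum {R : Type*} [CommRing R] (x : R) : ℕ → ℕ → R
  | 0, _ => 1
  | m + 1, top => ∑ v ∈ Finset.range (top + 1), x ^ v * chainSum x m v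

lemma chainSum_succ {R : Type*} [CommRing R] (x : R) (m top : ℕ) :
    chainSum x (m + 1) top = ∑ v ∈ Finset.range (top + 1), x ^ v * chainSum x m v := rfl

lemma chainSum_succ_top {R : Type*} [CommRing R] (x : R) (m d : ℕ) :
    chainSum x (m + 1) (d + 1) = chainSum x (m + 1) d + x ^ (d + 1) * chainSum x m (d + 1) := by
  rw [chainSum_succ, chainSum_succ, Finset.sum_range_succ]

lemma MI6_aux {R : Type*} [CommRing R] (x : R) (m b : ℕ) : ∀ d : ℕ,
    (∑ k ∈ Finset.range (d + 1), x ^ (b * k + k) * chainSum x m k) +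
      (∑ k ∈ Finset.range d, x ^ (b * (k + 1)) * chainSum x (m + 1) k) =
    (∑ k ∈ Finset.range d, x ^ (b * k) * chainSum x (m + 1) k) +
      x ^ (b * d) * chainSum x (m + 1) d := by
  intro d
  induction d with
  | zero => simp [chainSum]
  | succ d ih =>
      rw [Finset.sum_range_succ (f := fun k => x ^ (b * k + k) * chainSum x m k),
        Finset.sum_range_succ (f := fun k => x ^ (b * (k + 1)) * chainSum x (m + 1) k),
        Finset.sum_range_succ (f := fun k => x ^ (b * k) * chainSum x (m + 1) k),
        chainSum_succ_top]
      linear_combination ih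

/-- Generating-function form of the inter-dimensional simplex duality MI6:
`∑ x^(βk + k₁+⋯+k_{n-1})` over `0 ≤ k_{n-1} ≤ ⋯ ≤ k₁ ≤ k ≤ δ-1`, plus
`∑ x^((β-1)(k+1) + k₁+⋯+k_n)` over `0 ≤ k_n ≤ ⋯ ≤ k₁ ≤ k ≤ δ-2`, equals
`∑ x^((β-1)k + k₁+⋯+k_n)` over `0 ≤ k_n ≤ ⋯ ≤ k₁ ≤ k ≤ δ-2`, plus
`∑ x^((β-1)(δ-1) + k + k₁+⋯+k_{n-1})` over `0 ≤ k_{n-1} ≤ ⋯ ≤ k₁ ≤ k ≤ δ-1`. -/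
theorem MI6_generating_function (R : Type*) [CommRing R] (x : R) (n β δ : ℕ)
    (hn : 1 ≤ n) (hβ : 1 ≤ β) (hδ : 1 ≤ δ) :
    (∑ k ∈ Finset.range δ, x ^ (β * k) * chainSum x (n - 1) k) +
      (∑ k ∈ Finset.range (δ - 1), x ^ ((β - 1) * (k + 1)) * chainSum x n k) =
    (∑ k ∈ Finset.range (δ - 1), x ^ ((β - 1) * k) * chainSum x n k) +
      (∑ k ∈ Finset.range δ, x ^ ((β - 1) * (δ - 1) + k) * chainSum x (n - 1) k) := by
  obtain ⟨m, rfl⟩ : ∃ m, n = m + 1 := ⟨n - 1, (Nat.succ_pred_eq_of_pos hn).symm⟩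
  obtain ⟨b, rfl⟩ : ∃ b, β = b + 1 := ⟨β - 1, (Nat.succ_pred_eq_of_pos hβ).symm⟩
  obtain ⟨d, rfl⟩ : ∃ d, δ = d + 1 := ⟨δ - 1, (Nat.succ_pred_eq_of_pos hδ).symm⟩
  simp only [Nat.add_sub_cancel]
  have h2 : (∑ k ∈ Finset.range (d + 1), x ^ (b * d + k) * chainSum x m k) =
      x ^ (b * d) * chainSum x (m + 1) d := by
    rw [chainSum_succ, Finset.mul_sum]
    exact Finset.sum_congr rfl fun k _ => by rw [pow_add, mul_assoc]
  rw [h2]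
  have h1 : (∑ k ∈ Finset.range (d + 1), x ^ ((b + 1) * k) * chainSum x m k) =
      ∑ k ∈ Finset.range (d + 1), x ^ (b * k + k) * chainSum x m k := by
    apply Finset.sum_congr rfl
    intro k _
    ring_nf
  rw [h1]
  exact MI6_aux x m b d
end

section
/- Stage-2 Neville elimination closed form: For all indices 2 ≤ i, j ≤ n, the stage-2 matrix of the Neville elimination of V satisfies U(2)_{i,j} = σ² η^{(i−j)²} (1 − η^{2(i−1)(j−1)}). -/
/-- The Gaussian-covariance kernel on 1-based indices:
`V σ θ δ i j = σ² e^{-θ (i-j)² δ²}`. -/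
noncomputable def gaussV (σ θ δ : ℝ) (i j : ℕ) : ℝ :=
  σ ^ 2 * Real.exp (-θ * ((i : ℝ) - (j : ℝ)) ^ 2 * δ ^ 2)

/-- `nevilleU σ θ δ t` is the stage-`(t+1)` matrix `U(t+1)` (on 1-based indices) of the
Neville elimination of the Gaussian-covariance matrix: `U(1) = V`, and `U(s+1)` agrees
with `U(s)` in rows `1, …, s`, while for `i ≥ s + 1` one has `U(s+1)_{i,j} = 0` for
`j ≤ s` and `U(s+1)_{i,j} = U(s)_{i,j} - U(s)_{i,s} U(s)_{s,j} / U(s)_{s,s}` for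
`j ≥ s + 1`. -/
noncomputable def nevilleU (σ θ δ : ℝ) : ℕ → ℕ → ℕ → ℝ
  | 0, i, j => gaussV σ θ δ i j
  | t + 1, i, j =>
    if i ≤ t + 1 then nevilleU σ θ δ t i j
    else if j ≤ t + 1 then 0
    else nevilleU σ θ δ t i j -
      nevilleU σ θ δ t i (t + 1) * nevilleU σ θ δ t (t + 1) j /
        nevilleU σ θ δ t (t + 1) (t + 1)

lemma exp_zpow_aux (x : ℝ) (m : ℤ) : Real.exp x ^ m = Real.exp ((m : ℝ) * x) := by
  rcases m with n | n
  · simp [zpow_natCast, ← Real.exp_nat_mul]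
  · rw [zpow_negSucc, ← Real.exp_nat_mul, ← Real.exp_neg]
    push_cast
    ring_nf

/-- Stage-2 Neville elimination closed form: for `2 ≤ i, j ≤ n`,
`U(2)_{i,j} = σ² η^{(i-j)²} (1 - η^{2(i-1)(j-1)})`, where `η = e^{-θδ²}`. -/
theorem neville_stage_two (n : ℕ) (σ θ δ : ℝ) (hn : 1 ≤ n)
    (hσ : 0 < σ) (hθ : 0 < θ) (hδ : 0 < δ) (i j : ℕ)
    (hi2 : 2 ≤ i) (hin : i ≤ n) (hj2 : 2 ≤ j) (hjn : j ≤ n) :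
    nevilleU σ θ δ 1 i j =
      σ ^ 2 * Real.exp (-θ * δ ^ 2) ^ (((i : ℤ) - (j : ℤ)) ^ 2) *
        (1 - Real.exp (-θ * δ ^ 2) ^ (2 * (i - 1) * (j - 1))) := by
  have hi1 : ¬ i ≤ 1 := by omega
  have hj1 : ¬ j ≤ 1 := by omega
  have hσ2 : (σ : ℝ) ^ 2 ≠ 0 := by positivity
  have ci : ((i - 1 : ℕ) : ℝ) = (i : ℝ) - 1 := by
    have : 1 ≤ i := by omega
    push_cast [this]; ring
  have cj : ((j - 1 : ℕ) : ℝ) = (j : ℝ) - 1 := by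
    have : 1 ≤ j := by omega
    push_cast [this]; ring
  simp only [nevilleU, if_neg hi1, if_neg hj1, gaussV]
  rw [exp_zpow_aux, ← Real.exp_nat_mul]
  push_cast
  rw [ci, cj]
  have h0 : -θ * ((1:ℝ) - 1) ^ 2 * δ ^ 2 = 0 := by ring
  rw [h0, Real.exp_zero, mul_one]
  have hD : σ ^ 2 * Real.exp (-θ * ((i:ℝ) - 1) ^ 2 * δ ^ 2) *
      (σ ^ 2 * Real.exp (-θ * ((1:ℝ) - (j:ℝ)) ^ 2 * δ ^ 2)) / (σ ^ 2) =
      σ ^ 2 * Real.exp ((-θ * ((i:ℝ) - 1) ^ 2 * δ ^ 2) + (-θ * ((1:ℝ) - (j:ℝ)) ^ 2 * δ ^ 2)) := by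
    rw [Real.exp_add]; field_simp
  rw [hD]
  have harg : (-θ * ((i:ℝ) - 1) ^ 2 * δ ^ 2) + (-θ * ((1:ℝ) - (j:ℝ)) ^ 2 * δ ^ 2) =
      ((i:ℝ) - (j:ℝ)) ^ 2 * (-θ * δ ^ 2) + 2 * ((i:ℝ) - 1) * ((j:ℝ) - 1) * (-θ * δ ^ 2) := by
    ring
  have e1 : -θ * ((i:ℝ) - (j:ℝ)) ^ 2 * δ ^ 2 = ((i:ℝ) - (j:ℝ)) ^ 2 * (-θ * δ ^ 2) := by ring
  rw [harg, e1, Real.exp_add]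
  ring
end

section
/- Pivot formula for Neville elimination of the Gaussian-covariance matrix: For every 1 ≤ s ≤ n, the stage-s pivot satisfies U(s)_{s,s} = σ² ∏_{q=1}^{s−1} (1 − η^{2q}) (the empty product for s = 1 being 1); in particular every pivot U(s)_{s,s} is strictly positive. -/
noncomputable def hp : List ℝ → ℕ → ℝ
  | _, 0 => 1
  | [], _ + 1 => 0
  | a :: l, m + 1 => a * hp (a :: l) m + hp l (m + 1)
  termination_by l m => (l.length, m)

lemma hp_zero (l : List ℝ) : hp l 0 = 1 := by cases l <;> simp [hp]

lemma hp_cons (a : ℝ) (l : List ℝ) (m : ℕ) :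
    hp (a :: l) (m + 1) = a * hp (a :: l) m + hp l (m + 1) := by
  rw [hp]

lemma hp_single (a : ℝ) : ∀ m, hp [a] m = a ^ m
  | 0 => by simp [hp_zero]
  | m + 1 => by
      rw [hp_cons, hp_single a m]
      simp [hp]
      ring

lemma hp_sub (u v : ℝ) (l : List ℝ) : ∀ m : ℕ,
    hp (u :: l) (m + 1) - hp (v :: l) (m + 1) = (u - v) * hp (u :: v :: l) m
  | 0 => by simp only [hp_cons, hp_zero]; ring
  | m + 1 => by
      rw [hp_cons u l (m + 1), hp_cons v l (m + 1), hp_cons u (v :: l) m]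
      linear_combination u * hp_sub u v l m

noncomputable def xv (θ δ : ℝ) (k : ℕ) : ℝ := Real.exp (θ * δ ^ 2) ^ (2 * k)

noncomputable def xl (θ δ : ℝ) : ℕ → List ℝ
  | 0 => []
  | t + 1 => xv θ δ (t + 1) :: xl θ δ t

lemma eta_cancel (θ δ : ℝ) (n : ℕ) :
    Real.exp (-θ * δ ^ 2) ^ n * Real.exp (θ * δ ^ 2) ^ n = 1 := by
  rw [← mul_pow, ← Real.exp_add, show -θ * δ ^ 2 + θ * δ ^ 2 = 0 by ring, Real.exp_zero, one_pow]

lemma xv_lt (θ δ : ℝ) (hθ : 0 < θ) (hδ : 0 < δ) {q k : ℕ} (h : q < k) :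
    xv θ δ q < xv θ δ k := by
  have hE : 1 < Real.exp (θ * δ ^ 2) := by
    rw [show (1 : ℝ) = Real.exp 0 by simp]
    exact Real.exp_lt_exp.mpr (by positivity)
  exact pow_lt_pow_right₀ hE (by omega)

lemma gauss_split (θ δ : ℝ) (i j : ℕ) (hj : 1 ≤ j) :
    Real.exp (-θ * ((i : ℝ) - (j : ℝ)) ^ 2 * δ ^ 2) =
      Real.exp (-θ * δ ^ 2) ^ (i ^ 2) * Real.exp (-θ * δ ^ 2) ^ (j ^ 2) *
        Real.exp (θ * δ ^ 2) ^ (2 * i) * Real.exp (θ * δ ^ 2) ^ (2 * i * (j - 1)) := by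
  rw [← Real.exp_nat_mul, ← Real.exp_nat_mul, ← Real.exp_nat_mul, ← Real.exp_nat_mul,
      ← Real.exp_add, ← Real.exp_add, ← Real.exp_add]
  congr 1
  push_cast [Nat.cast_sub hj]
  ring


lemma neville_closed (σ θ δ : ℝ) (hσ : σ ≠ 0) (hθ : 0 < θ) (hδ : 0 < δ) :
    ∀ t i j : ℕ, t + 1 ≤ i → t + 1 ≤ j →
    nevilleU σ θ δ t i j =
      σ ^ 2 * Real.exp (-θ * δ ^ 2) ^ (i ^ 2) * Real.exp (-θ * δ ^ 2) ^ (j ^ 2) *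
        xv θ δ i * (∏ q ∈ Finset.Icc 1 t, (xv θ δ i - xv θ δ q)) *
        hp (xv θ δ i :: xl θ δ t) (j - (t + 1)) := by
  intro t
  induction t with
  | zero =>
      intro i j hi hj
      simp only [nevilleU, gaussV, xl, xv]
      rw [Finset.Icc_eq_empty (by omega), Finset.prod_empty, hp_single, ← pow_mul,
          gauss_split θ δ i j hj]
      ring
  | succ t ih =>
      intro i j hi hj
      obtain ⟨m, rfl⟩ : ∃ m, j = t + 2 + m := ⟨j - (t + 2), by omega⟩
      have hPs : (0 : ℝ) < ∏ q ∈ Finset.Icc 1 t, (xv θ δ (t + 1) - xv θ δ q) := by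
        apply Finset.prod_pos
        intro q hq
        have := Finset.mem_Icc.mp hq
        have := xv_lt θ δ hθ hδ (show q < t + 1 by omega)
        linarith
      have hη : Real.exp (-θ * δ ^ 2) ^ ((t + 1) ^ 2) ≠ 0 := pow_ne_zero _ (Real.exp_ne_zero _)
      have hXs : xv θ δ (t + 1) ≠ 0 := pow_ne_zero _ (Real.exp_ne_zero _)
      simp only [nevilleU]
      rw [if_neg (by omega), if_neg (by omega)]
      rw [ih i (t + 2 + m) (by omega) (by omega), ih i (t + 1) (by omega) le_rfl,
          ih (t + 1) (t + 2 + m) le_rfl (by omega), ih (t + 1) (t + 1) le_rfl le_rfl]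
      rw [show t + 2 + m - (t + 1) = m + 1 by omega, show t + 1 - (t + 1) = 0 by omega,
          show t + 2 + m - (t + 1 + 1) = m by omega, hp_zero, hp_zero]
      rw [Finset.prod_Icc_succ_top (by omega : 1 ≤ t + 1)]
      simp only [xl]
      have hquot : σ ^ 2 * Real.exp (-θ * δ ^ 2) ^ i ^ 2 * Real.exp (-θ * δ ^ 2) ^ (t + 1) ^ 2 *
            xv θ δ i * (∏ q ∈ Finset.Icc 1 t, (xv θ δ i - xv θ δ q)) * 1 *
            (σ ^ 2 * Real.exp (-θ * δ ^ 2) ^ (t + 1) ^ 2 *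
              Real.exp (-θ * δ ^ 2) ^ (t + 2 + m) ^ 2 * xv θ δ (t + 1) *
              (∏ q ∈ Finset.Icc 1 t, (xv θ δ (t + 1) - xv θ δ q)) *
              hp (xv θ δ (t + 1) :: xl θ δ t) (m + 1)) /
            (σ ^ 2 * Real.exp (-θ * δ ^ 2) ^ (t + 1) ^ 2 *
              Real.exp (-θ * δ ^ 2) ^ (t + 1) ^ 2 * xv θ δ (t + 1) *
              (∏ q ∈ Finset.Icc 1 t, (xv θ δ (t + 1) - xv θ δ q)) * 1) =
          σ ^ 2 * Real.exp (-θ * δ ^ 2) ^ i ^ 2 * Real.exp (-θ * δ ^ 2) ^ (t + 2 + m) ^ 2 *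
            xv θ δ i * (∏ q ∈ Finset.Icc 1 t, (xv θ δ i - xv θ δ q)) *
            hp (xv θ δ (t + 1) :: xl θ δ t) (m + 1) := by
        field_simp
      rw [hquot]
      linear_combination (σ ^ 2 * Real.exp (-θ * δ ^ 2) ^ i ^ 2 *
          Real.exp (-θ * δ ^ 2) ^ (t + 2 + m) ^ 2 * xv θ δ i *
          (∏ q ∈ Finset.Icc 1 t, (xv θ δ i - xv θ δ q))) *
        hp_sub (xv θ δ i) (xv θ δ (t + 1)) (xl θ δ t) m

lemma pivot_formula (σ θ δ : ℝ) (hσ : σ ≠ 0) (hθ : 0 < θ) (hδ : 0 < δ) (t : ℕ) :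
    nevilleU σ θ δ t (t + 1) (t + 1) =
      σ ^ 2 * ∏ q ∈ Finset.Icc 1 t, (1 - Real.exp (-θ * δ ^ 2) ^ (2 * q)) := by
  set η := Real.exp (-θ * δ ^ 2) with hηdef
  rw [neville_closed σ θ δ hσ hθ hδ t (t + 1) (t + 1) le_rfl le_rfl,
      show t + 1 - (t + 1) = 0 by omega, hp_zero, mul_one]
  have hfac : ∀ q ∈ Finset.Icc 1 t, η ^ (2 * (t + 1)) * (xv θ δ (t + 1) - xv θ δ q) =
      1 - η ^ (2 * (t + 1 - q)) := by
    intro q hq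
    have hq' := Finset.mem_Icc.mp hq
    simp only [xv]
    rw [mul_sub, eta_cancel, show 2 * (t + 1) = 2 * (t + 1 - q) + 2 * q by omega, pow_add,
        mul_assoc, eta_cancel, mul_one]
  calc σ ^ 2 * η ^ (t + 1) ^ 2 * η ^ (t + 1) ^ 2 * xv θ δ (t + 1) *
        ∏ q ∈ Finset.Icc 1 t, (xv θ δ (t + 1) - xv θ δ q)
      = σ ^ 2 * ((η ^ (2 * (t + 1))) ^ t *
          ∏ q ∈ Finset.Icc 1 t, (xv θ δ (t + 1) - xv θ δ q)) := by
        have : η ^ (t + 1) ^ 2 * η ^ (t + 1) ^ 2 * xv θ δ (t + 1) = (η ^ (2 * (t + 1))) ^ t := by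
          simp only [xv]
          rw [← pow_add, show (t + 1) ^ 2 + (t + 1) ^ 2 = 2 * (t + 1) * t + 2 * (t + 1) by ring,
              pow_add, mul_assoc, eta_cancel, mul_one, pow_mul]
        rw [← this]; ring
    _ = σ ^ 2 * ∏ q ∈ Finset.Icc 1 t, (η ^ (2 * (t + 1)) * (xv θ δ (t + 1) - xv θ δ q)) := by
        rw [Finset.prod_mul_distrib, Finset.prod_const, Nat.card_Icc]
        norm_num
    _ = σ ^ 2 * ∏ q ∈ Finset.Icc 1 t, (1 - η ^ (2 * (t + 1 - q))) := by
        rw [Finset.prod_congr rfl hfac]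
    _ = σ ^ 2 * ∏ q ∈ Finset.Icc 1 t, (1 - η ^ (2 * q)) := by
        congr 1
        refine Finset.prod_nbij' (fun q => t + 1 - q) (fun q => t + 1 - q) ?_ ?_ ?_ ?_ ?_
        · intro a ha; have := Finset.mem_Icc.mp ha
          show t + 1 - a ∈ Finset.Icc 1 t
          exact Finset.mem_Icc.mpr (by omega)
        · intro a ha; have := Finset.mem_Icc.mp ha
          show t + 1 - a ∈ Finset.Icc 1 t
          exact Finset.mem_Icc.mpr (by omega)
        · intro a ha; have := Finset.mem_Icc.mp ha
          show t + 1 - (t + 1 - a) = a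
          omega
        · intro a ha; have := Finset.mem_Icc.mp ha
          show t + 1 - (t + 1 - a) = a
          omega
        · intro a ha
          rfl

/-- Pivot formula for Neville elimination of the Gaussian-covariance matrix: for every
`1 ≤ s ≤ n`, `U(s)_{s,s} = σ² ∏_{q=1}^{s-1} (1 - η^{2q})` where `η = e^{-θδ²}`
(the empty product for `s = 1` being `1`); in particular every pivot is positive. -/
theorem neville_pivots (n : ℕ) (σ θ δ : ℝ) (hn : 1 ≤ n)
    (hσ : 0 < σ) (hθ : 0 < θ) (hδ : 0 < δ) (s : ℕ) (hs1 : 1 ≤ s) (hsn : s ≤ n) :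
    nevilleU σ θ δ (s - 1) s s =
      σ ^ 2 * ∏ q ∈ Finset.Icc 1 (s - 1), (1 - Real.exp (-θ * δ ^ 2) ^ (2 * q)) ∧
    0 < nevilleU σ θ δ (s - 1) s s := by
  obtain ⟨t, rfl⟩ : ∃ t, s = t + 1 := ⟨s - 1, by omega⟩
  have hform : nevilleU σ θ δ (t + 1 - 1) (t + 1) (t + 1) =
      σ ^ 2 * ∏ q ∈ Finset.Icc 1 (t + 1 - 1), (1 - Real.exp (-θ * δ ^ 2) ^ (2 * q)) := by
    simpa using pivot_formula σ θ δ (ne_of_gt hσ) hθ hδ t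
  refine ⟨hform, ?_⟩
  rw [hform]
  apply mul_pos (by positivity)
  apply Finset.prod_pos
  intro q hq
  have hq' := Finset.mem_Icc.mp hq
  have hη1 : Real.exp (-θ * δ ^ 2) < 1 := by
    rw [Real.exp_lt_one_iff]
    nlinarith [mul_pos hθ (pow_pos hδ 2)]
  have : Real.exp (-θ * δ ^ 2) ^ (2 * q) < 1 :=
    pow_lt_one₀ (le_of_lt (Real.exp_pos _)) hη1 (by omega)
  linarith
end

section
/- Lemma, Part b (factorization of the determinant of the 1D Gaussian-covariance matrix): det(V) = σ^{2n} ∏_{s=2}^{n} ∏_{x=1}^{s−1} (1 − e^{−2xθδ²}). -/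
open Finset Matrix

lemma prod_pairs_aux (n : ℕ) (f : ℕ → ℝ) :
    (∏ i : Fin n, ∏ j ∈ Finset.Ioi i, f ((j : ℕ) - (i : ℕ))) =
      ∏ s ∈ Finset.Icc 2 n, ∏ x ∈ Finset.Icc 1 (s - 1), f x := by
  rw [← Finset.prod_sigma (Finset.univ : Finset (Fin n)) (fun i => Finset.Ioi i)
        (fun p : Σ _ : Fin n, Fin n => f ((p.2 : ℕ) - (p.1 : ℕ))),
      ← Finset.prod_sigma (Finset.Icc 2 n) (fun s => Finset.Icc 1 (s - 1))
        (fun p : Σ _ : ℕ, ℕ => f p.2)]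
  apply Finset.prod_nbij (fun p => (⟨(p.2 : ℕ) + 1, (p.2 : ℕ) - (p.1 : ℕ)⟩ : Σ _ : ℕ, ℕ))
  · rintro ⟨i, j⟩ h
    simp only [Finset.mem_sigma, Finset.mem_univ, Finset.mem_Ioi, true_and] at h
    have hij : (i : ℕ) < (j : ℕ) := h
    have hj : (j : ℕ) < n := j.isLt
    simp only [Finset.mem_sigma, Finset.mem_Icc]
    omega
  · rintro ⟨i, j⟩ h ⟨i', j'⟩ h' heq
    simp only [Finset.coe_sigma, Set.mem_sigma_iff, Finset.mem_coe, Finset.mem_univ,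
      Finset.mem_Ioi, true_and] at h h'
    have hij : (i : ℕ) < (j : ℕ) := h
    have hij' : (i' : ℕ) < (j' : ℕ)  := h'
    simp only [Sigma.mk.inj_iff, heq_eq_eq] at heq
    have h1 : (j : ℕ) = (j' : ℕ) := by omega
    have h2 : (i : ℕ) = (i' : ℕ) := by omega
    ext <;> simp [Fin.val_inj] at h1 h2 ⊢ <;> [exact h2; exact h1]
  · rintro ⟨s, x⟩ h
    simp only [Finset.coe_sigma, Set.mem_sigma_iff, Finset.mem_coe, Finset.mem_Icc] at h
    obtain ⟨⟨hs2, hsn⟩, hx1, hxs⟩ := h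
    refine ⟨⟨⟨s - 1 - x, by omega⟩, ⟨s - 1, by omega⟩⟩, ?_, ?_⟩
    · simp only [Finset.coe_sigma, Set.mem_sigma_iff, Finset.mem_coe, Finset.mem_univ,
        Finset.mem_Ioi, true_and]
      show (⟨s - 1 - x, _⟩ : Fin n) < ⟨s - 1, _⟩
      simp only [Fin.mk_lt_mk]
      omega
    · simp only [Sigma.mk.inj_iff, heq_eq_eq]
      constructor <;> omega
  · rintro ⟨i, j⟩ h
    rfl

/-- Lemma, Part b (factorization of the determinant of the 1D Gaussian-covariance
matrix): `det V = σ^{2n} ∏_{s=2}^{n} ∏_{x=1}^{s-1} (1 - e^{-2xθδ²})`. -/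
theorem det_gaussian_cov_factorization (n : ℕ) (σ θ δ : ℝ) (hn : 1 ≤ n)
    (hσ : 0 < σ) (hθ : 0 < θ) (hδ : 0 < δ) :
    (Matrix.of fun i j : Fin n =>
        σ ^ 2 * Real.exp (-θ * ((i : ℝ) - (j : ℝ)) ^ 2 * δ ^ 2)).det =
      σ ^ (2 * n) *
        ∏ s ∈ Finset.Icc 2 n, ∏ x ∈ Finset.Icc 1 (s - 1),
          (1 - Real.exp (-(2 * (x : ℝ)) * θ * δ ^ 2)) := by
  set c : ℝ := 2 * θ * δ ^ 2 with hc
  set a : Fin n → ℝ := fun i => σ * Real.exp (-θ * (i : ℝ) ^ 2 * δ ^ 2) with ha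
  set v : Fin n → ℝ := fun i => Real.exp (c * (i : ℝ)) with hv
  have hM : (Matrix.of fun i j : Fin n =>
        σ ^ 2 * Real.exp (-θ * ((i : ℝ) - (j : ℝ)) ^ 2 * δ ^ 2))
      = Matrix.diagonal a * Matrix.vandermonde v * Matrix.diagonal a := by
    ext i j
    simp only [Matrix.of_apply, Matrix.mul_diagonal, Matrix.diagonal_mul,
      Matrix.vandermonde_apply, ha, hv]
    rw [← Real.exp_nat_mul]
    rw [show σ * Real.exp (-θ * (i : ℝ) ^ 2 * δ ^ 2) * Real.exp ((j : ℕ) * (c * (i : ℝ)))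
        * (σ * Real.exp (-θ * (j : ℝ) ^ 2 * δ ^ 2)) =
        σ ^ 2 * (Real.exp (-θ * (i : ℝ) ^ 2 * δ ^ 2) * Real.exp ((j : ℕ) * (c * (i : ℝ)))
          * Real.exp (-θ * (j : ℝ) ^ 2 * δ ^ 2)) by ring]
    rw [← Real.exp_add, ← Real.exp_add]
    congr 1
    rw [hc]
    push_cast
    ring
  rw [hM, Matrix.det_mul, Matrix.det_mul, Matrix.det_diagonal,
    Matrix.det_vandermonde]
  have hsplit : ∀ i j : Fin n, i < j →
      v j - v i = Real.exp (c * (j : ℝ)) *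
        (1 - Real.exp (-(2 * (((j : ℕ) - (i : ℕ) : ℕ) : ℝ)) * θ * δ ^ 2)) := by
    intro i j hij
    have hle : (i : ℕ) ≤ (j : ℕ) := le_of_lt hij
    rw [hv]
    simp only
    rw [mul_sub, mul_one, ← Real.exp_add]
    congr 2
    rw [Nat.cast_sub hle, hc]
    ring
  have hprod : (∏ i : Fin n, ∏ j ∈ Finset.Ioi i, (v j - v i)) =
      (∏ i : Fin n, ∏ j ∈ Finset.Ioi i, Real.exp (c * (j : ℝ))) *
      (∏ i : Fin n, ∏ j ∈ Finset.Ioi i,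
        (1 - Real.exp (-(2 * (((j : ℕ) - (i : ℕ) : ℕ) : ℝ)) * θ * δ ^ 2))) := by
    rw [← Finset.prod_mul_distrib]
    apply Finset.prod_congr rfl
    intro i _
    rw [← Finset.prod_mul_distrib]
    apply Finset.prod_congr rfl
    intro j hj
    exact hsplit i j (Finset.mem_Ioi.mp hj)
  rw [hprod]
  have h1 : (∏ i : Fin n, a i) = σ ^ n * Real.exp (∑ i : Fin n, -θ * (i : ℝ) ^ 2 * δ ^ 2) := by
    simp only [ha]
    rw [Finset.prod_mul_distrib, Finset.prod_const, Finset.card_univ, Fintype.card_fin,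
      ← Real.exp_sum]
  have h2 : (∏ i : Fin n, ∏ j ∈ Finset.Ioi i, Real.exp (c * (j : ℝ)))
      = Real.exp (∑ i : Fin n, ∑ j ∈ Finset.Ioi i, c * (j : ℝ)) := by
    rw [Real.exp_sum]
    exact Finset.prod_congr rfl fun i _ => (Real.exp_sum _ _).symm
  have hsum : (∑ i : Fin n, ∑ j ∈ Finset.Ioi i, c * (j : ℝ))
      = ∑ i : Fin n, (2 * θ * δ ^ 2) * (i : ℝ) ^ 2 := by
    rw [Finset.sum_comm' (t' := Finset.univ) (s' := fun j => Finset.Iio j)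
      (by intro x y; simp [and_comm])]
    apply Finset.sum_congr rfl
    intro j _
    rw [Finset.sum_const, Fin.card_Iio, nsmul_eq_mul]
    push_cast
    ring
  rw [h1, h2, hsum]
  rw [prod_pairs_aux n (fun x => 1 - Real.exp (-(2 * (x : ℝ)) * θ * δ ^ 2))]
  have hE : Real.exp (∑ i : Fin n, -θ * (i : ℝ) ^ 2 * δ ^ 2) *
      Real.exp (∑ i : Fin n, 2 * θ * δ ^ 2 * (i : ℝ) ^ 2) *
      Real.exp (∑ i : Fin n, -θ * (i : ℝ) ^ 2 * δ ^ 2) = 1 := by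
    rw [← Real.exp_add, ← Real.exp_add, ← Finset.sum_add_distrib, ← Finset.sum_add_distrib,
      Finset.sum_eq_zero (fun i _ => by ring), Real.exp_zero]
  rw [show σ ^ (2 * n) = σ ^ n * σ ^ n from by rw [two_mul, pow_add]]
  linear_combination (σ ^ n * σ ^ n *
    ∏ s ∈ Finset.Icc 2 n, ∏ x ∈ Finset.Icc 1 (s - 1),
      (1 - Real.exp (-(2 * (x : ℝ)) * θ * δ ^ 2))) * hE
end

section
/- Determinant of the 1D Gaussian-covariance matrix as a product over point pairs: det(V) = σ^{2n} ∏_{q=1}^{n−1} (1 − e^{−2qθδ²})^{n−q}, i.e., each of the n−q pairs of points at separation qδ contributes one factor h_q = 1 − η^{2q} to det(V)/σ^{2n}. -/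
lemma sum_swap_Ioi {M : Type*} [AddCommMonoid M] (n : ℕ) (f : Fin n → Fin n → M) :
    ∑ i : Fin n, ∑ j ∈ Finset.Ioi i, f i j = ∑ j : Fin n, ∑ i ∈ Finset.Iio j, f i j := by
  rw [Finset.sum_sigma', Finset.sum_sigma']
  refine Finset.sum_nbij' (fun p ↦ ⟨p.2, p.1⟩) (fun p ↦ ⟨p.2, p.1⟩) ?_ ?_ ?_ ?_ ?_ <;> simp

lemma pair_prod (n : ℕ) (f : ℕ → ℝ) :
    (∏ i : Fin n, ∏ j ∈ Finset.Ioi i, f ((j : ℕ) - (i : ℕ))) =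
      ∏ q ∈ Finset.Icc 1 (n - 1), f q ^ (n - q) := by
  rcases Nat.eq_zero_or_pos n with h0 | hn
  · subst h0; simp
  have hpow : ∀ q ∈ Finset.Icc 1 (n - 1), f q ^ (n - q) = ∏ _m ∈ Finset.range (n - q), f q := by
    intro q _; rw [Finset.prod_const, Finset.card_range]
  rw [Finset.prod_congr rfl hpow, Finset.prod_sigma', Finset.prod_sigma']
  refine Finset.prod_nbij' (fun p ↦ ⟨(p.2 : ℕ) - (p.1 : ℕ), (p.1 : ℕ)⟩)
    (fun p ↦ ⟨⟨p.2 % n, Nat.mod_lt _ hn⟩, ⟨(p.2 + p.1) % n, Nat.mod_lt _ hn⟩⟩) ?_ ?_ ?_ ?_ ?_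
  · rintro ⟨i, j⟩ hp
    simp only [Finset.mem_sigma, Finset.mem_univ, Finset.mem_Ioi, Fin.lt_def, true_and] at hp
    have hi := i.isLt; have hj := j.isLt
    refine Finset.mem_sigma.mpr ⟨Finset.mem_Icc.mpr ⟨?_, ?_⟩, Finset.mem_range.mpr ?_⟩
    · show 1 ≤ (j : ℕ) - (i : ℕ); omega
    · show (j : ℕ) - (i : ℕ) ≤ n - 1; omega
    · show (i : ℕ) < n - ((j : ℕ) - (i : ℕ)); omega
  · rintro ⟨q, m⟩ hp
    simp only [Finset.mem_sigma, Finset.mem_Icc, Finset.mem_range] at hp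
    have h1 : m % n = m := Nat.mod_eq_of_lt (by omega)
    have h2 : (m + q) % n = m + q := Nat.mod_eq_of_lt (by omega)
    refine Finset.mem_sigma.mpr ⟨Finset.mem_univ _, Finset.mem_Ioi.mpr ?_⟩
    rw [Fin.lt_def]
    show m % n < (m + q) % n
    rw [h1, h2]; omega
  · rintro ⟨i, j⟩ hp
    simp only [Finset.mem_sigma, Finset.mem_univ, Finset.mem_Ioi, Fin.lt_def, true_and] at hp
    have hi := i.isLt; have hj := j.isLt
    refine Sigma.ext (Fin.ext ?_) (heq_of_eq (Fin.ext ?_))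
    · show (i : ℕ) % n = (i : ℕ); exact Nat.mod_eq_of_lt hi
    · show ((i : ℕ) + ((j : ℕ) - (i : ℕ))) % n = (j : ℕ)
      rw [Nat.mod_eq_of_lt (by omega)]; omega
  · rintro ⟨q, m⟩ hp
    simp only [Finset.mem_sigma, Finset.mem_Icc, Finset.mem_range] at hp
    have h1 : m % n = m := Nat.mod_eq_of_lt (by omega)
    have h2 : (m + q) % n = m + q := Nat.mod_eq_of_lt (by omega)
    refine Sigma.ext ?_ (heq_of_eq ?_)
    · show ((m + q) % n) - (m % n) = q
      rw [h1, h2]; omega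
    · show m % n = m; exact h1
  · rintro ⟨i, j⟩ _
    rfl

/-- Determinant of the 1D Gaussian-covariance matrix as a product over point pairs:
`det V = σ^{2n} ∏_{q=1}^{n-1} (1 - e^{-2qθδ²})^{n-q}`. -/
theorem det_gaussian_cov_pair_product (n : ℕ) (σ θ δ : ℝ) (hn : 1 ≤ n)
    (hσ : 0 < σ) (hθ : 0 < θ) (hδ : 0 < δ) :
    (Matrix.of fun i j : Fin n =>
        σ ^ 2 * Real.exp (-θ * ((i : ℝ) - (j : ℝ)) ^ 2 * δ ^ 2)).det =
      σ ^ (2 * n) *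
        ∏ q ∈ Finset.Icc 1 (n - 1),
          (1 - Real.exp (-(2 * (q : ℝ)) * θ * δ ^ 2)) ^ (n - q) := by
  have hmat : (Matrix.of fun i j : Fin n =>
        σ ^ 2 * Real.exp (-θ * ((i : ℝ) - (j : ℝ)) ^ 2 * δ ^ 2))
      = Matrix.of fun i j : Fin n =>
          (σ * Real.exp (-θ * (j : ℝ) ^ 2 * δ ^ 2)) *
            ((Matrix.of fun i j : Fin n =>
                (σ * Real.exp (-θ * (i : ℝ) ^ 2 * δ ^ 2)) *
                  (Matrix.vandermonde fun k : Fin n =>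
                    Real.exp (2 * θ * (k : ℝ) * δ ^ 2)) i j) i j) := by
    ext i j
    simp only [Matrix.of_apply, Matrix.vandermonde_apply]
    rw [← Real.exp_nat_mul]
    rw [show -θ * ((i : ℝ) - (j : ℝ)) ^ 2 * δ ^ 2
        = (-θ * (j : ℝ) ^ 2 * δ ^ 2) + ((-θ * (i : ℝ) ^ 2 * δ ^ 2)
          + ((j : ℕ) : ℝ) * (2 * θ * (i : ℝ) * δ ^ 2)) from by ring]
    rw [Real.exp_add, Real.exp_add]
    ring
  rw [hmat, Matrix.det_mul_row, Matrix.det_mul_column, Matrix.det_vandermonde]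
  -- factor each Vandermonde difference
  have hfac : ∀ i : Fin n, ∀ j ∈ Finset.Ioi i,
      Real.exp (2 * θ * (j : ℝ) * δ ^ 2) - Real.exp (2 * θ * (i : ℝ) * δ ^ 2)
        = Real.exp (2 * θ * (j : ℝ) * δ ^ 2) *
            (1 - Real.exp (-(2 * ((((j : ℕ) - (i : ℕ) : ℕ)) : ℝ)) * θ * δ ^ 2)) := by
    intro i j hj
    have hij : (i : ℕ) < (j : ℕ) := Fin.lt_def.mp (Finset.mem_Ioi.mp hj)
    rw [mul_sub, mul_one, ← Real.exp_add, Nat.cast_sub hij.le]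
    congr 2
    ring
  rw [Finset.prod_congr rfl fun i _ => Finset.prod_congr rfl (hfac i)]
  simp only [Finset.prod_mul_distrib]
  rw [pair_prod n (fun q => 1 - Real.exp (-(2 * (q : ℝ)) * θ * δ ^ 2))]
  -- now the scalar bookkeeping
  simp only [Finset.prod_const, Finset.card_univ, Fintype.card_fin, ← Real.exp_sum]
  have hzero : (∑ i : Fin n, -θ * (i : ℝ) ^ 2 * δ ^ 2)
      + ((∑ i : Fin n, -θ * (i : ℝ) ^ 2 * δ ^ 2)
      + (∑ i : Fin n, ∑ j ∈ Finset.Ioi i, 2 * θ * (j : ℝ) * δ ^ 2)) = 0 := by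
    rw [sum_swap_Ioi]
    simp only [Finset.sum_const, Fin.card_Iio, nsmul_eq_mul]
    rw [← Finset.sum_add_distrib, ← Finset.sum_add_distrib]
    refine Finset.sum_eq_zero fun i _ => ?_
    ring
  rw [show σ ^ n * Real.exp (∑ i : Fin n, -θ * (i : ℝ) ^ 2 * δ ^ 2) *
      (σ ^ n * Real.exp (∑ i : Fin n, -θ * (i : ℝ) ^ 2 * δ ^ 2) *
        (Real.exp (∑ i : Fin n, ∑ j ∈ Finset.Ioi i, 2 * θ * (j : ℝ) * δ ^ 2) *
          ∏ q ∈ Finset.Icc 1 (n - 1),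
            (1 - Real.exp (-(2 * (q : ℝ)) * θ * δ ^ 2)) ^ (n - q)))
      = (σ ^ n * σ ^ n) *
        (Real.exp ((∑ i : Fin n, -θ * (i : ℝ) ^ 2 * δ ^ 2)
          + ((∑ i : Fin n, -θ * (i : ℝ) ^ 2 * δ ^ 2)
          + (∑ i : Fin n, ∑ j ∈ Finset.Ioi i, 2 * θ * (j : ℝ) * δ ^ 2)))) *
        ∏ q ∈ Finset.Icc 1 (n - 1),
            (1 - Real.exp (-(2 * (q : ℝ)) * θ * δ ^ 2)) ^ (n - q) from by
    rw [Real.exp_add, Real.exp_add]; ring]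
  rw [hzero, Real.exp_zero, mul_one, ← pow_add, two_mul]
end

section
/- Positivity of the determinant of the 1D Gaussian-covariance matrix of evenly spaced points: det(V) > 0; in particular V is invertible. -/
open Matrix Finset Nat

/-- Some moment of a nonzero vector against the nodes `0,1,...,n-1` is nonzero. -/
lemma exists_moment_ne_zero {n : ℕ} (y : Fin n → ℝ) (hy : y ≠ 0) :
    ∃ k : Fin n, ∑ i, y i * (i : ℝ) ^ (k : ℕ) ≠ 0 := by
  by_contra h
  push_neg at h
  set v : Fin n → ℝ := fun i => (i : ℝ) with hv
  have hinj : Function.Injective v := by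
    intro a b hab
    have : (a : ℕ) = (b : ℕ) := Nat.cast_injective hab
    exact Fin.val_injective this
  set W := Matrix.vandermonde v with hW
  have hdet : W.det ≠ 0 := (Matrix.det_vandermonde_ne_zero_iff).2 hinj
  have hvm : Matrix.vecMul y W = 0 := by
    funext k
    simpa [Matrix.vecMul, dotProduct, hW, Matrix.vandermonde, hv] using h k
  have : y = 0 := by
    have h1 : W * W⁻¹ = 1 := Matrix.mul_nonsing_inv W (isUnit_iff_ne_zero.mpr hdet)
    calc y = Matrix.vecMul y 1 := by simp
      _ = Matrix.vecMul y (W * W⁻¹) := by rw [h1]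
      _ = Matrix.vecMul (Matrix.vecMul y W) W⁻¹ := by rw [Matrix.vecMul_vecMul]
      _ = 0 := by rw [hvm]; simp
  exact hy this

lemma real_exp_eq_tsum (x : ℝ) : Real.exp x = ∑' k : ℕ, x ^ k / k ! := by
  rw [Real.exp_eq_exp_ℝ, NormedSpace.exp_eq_tsum_div]

/-- Positivity of the quadratic form of the kernel `exp (c * i * j)`. -/
lemma kernel_sum_pos {n : ℕ} (c : ℝ) (hc : 0 < c) (y : Fin n → ℝ) (hy : y ≠ 0) :
    0 < ∑ i, ∑ j, y i * y j * Real.exp (c * (i : ℝ) * (j : ℝ)) := by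
  set g : Fin n × Fin n → ℕ → ℝ :=
    fun p k => y p.1 * y p.2 * ((c * (p.1 : ℝ) * (p.2 : ℝ)) ^ k / k !) with hg
  have hgsum : ∀ p : Fin n × Fin n, Summable (g p) := fun p =>
    (Real.summable_pow_div_factorial _).mul_left _
  set S : ℕ → ℝ := fun k => c ^ k / k ! * (∑ i, y i * (i : ℝ) ^ k) ^ 2 with hS
  have hSg : ∀ k : ℕ, ∑ p : Fin n × Fin n, g p k = S k := by
    intro k
    simp only [hS]
    rw [Fintype.sum_prod_type]
    have : (∑ i, y i * (i : ℝ) ^ k) ^ 2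
        = ∑ i, ∑ j, (y i * (i : ℝ) ^ k) * (y j * (j : ℝ) ^ k) := by
      rw [sq, Finset.sum_mul_sum]
    rw [this, Finset.mul_sum]
    refine Finset.sum_congr rfl fun i _ => ?_
    rw [Finset.mul_sum]
    refine Finset.sum_congr rfl fun j _ => ?_
    simp only [hg]
    rw [mul_pow, mul_pow]
    ring
  have hsum : Summable S := by
    have : Summable fun k => ∑ p : Fin n × Fin n, g p k :=
      summable_sum fun p _ => hgsum p
    exact this.congr hSg
  have heq : ∑ i, ∑ j, y i * y j * Real.exp (c * (i : ℝ) * (j : ℝ)) = ∑' k, S k := by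
    have h1 : ∀ p : Fin n × Fin n,
        y p.1 * y p.2 * Real.exp (c * (p.1 : ℝ) * (p.2 : ℝ)) = ∑' k, g p k := by
      intro p
      rw [real_exp_eq_tsum, ← tsum_mul_left]
    calc ∑ i, ∑ j, y i * y j * Real.exp (c * (i : ℝ) * (j : ℝ))
        = ∑ p : Fin n × Fin n, y p.1 * y p.2 * Real.exp (c * (p.1 : ℝ) * (p.2 : ℝ)) := by
          rw [Fintype.sum_prod_type]
      _ = ∑ p : Fin n × Fin n, ∑' k, g p k := Finset.sum_congr rfl fun p _ => h1 p
      _ = ∑' k, ∑ p : Fin n × Fin n, g p k :=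
          (Summable.tsum_finsetSum fun p _ => hgsum p).symm
      _ = ∑' k, S k := tsum_congr hSg
  rw [heq]
  obtain ⟨k0, hk0⟩ := exists_moment_ne_zero y hy
  refine Summable.tsum_pos hsum (fun k => ?_) (k0 : ℕ) ?_
  · simp only [hS]
    positivity
  · simp only [hS]
    have h1 : 0 < c ^ (k0 : ℕ) / ((k0 : ℕ)! : ℝ) := by positivity
    have h2 : 0 < (∑ i, y i * (i : ℝ) ^ (k0 : ℕ)) ^ 2 :=
      lt_of_le_of_ne (sq_nonneg _) (Ne.symm (pow_ne_zero 2 hk0))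
    exact mul_pos h1 h2

/-- Positivity of the determinant of the 1D Gaussian-covariance matrix of evenly
spaced points: `det V > 0`; in particular `V` is invertible. -/
theorem det_gaussian_cov_pos (n : ℕ) (σ θ δ : ℝ) (hn : 1 ≤ n)
    (hσ : 0 < σ) (hθ : 0 < θ) (hδ : 0 < δ) :
    0 < (Matrix.of fun i j : Fin n =>
          σ ^ 2 * Real.exp (-θ * ((i : ℝ) - (j : ℝ)) ^ 2 * δ ^ 2)).det ∧
      IsUnit (Matrix.of fun i j : Fin n =>
          σ ^ 2 * Real.exp (-θ * ((i : ℝ) - (j : ℝ)) ^ 2 * δ ^ 2)) := by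
  set V : Matrix (Fin n) (Fin n) ℝ := Matrix.of fun i j : Fin n =>
      σ ^ 2 * Real.exp (-θ * ((i : ℝ) - (j : ℝ)) ^ 2 * δ ^ 2) with hV
  have hpd : V.PosDef := by
    rw [Matrix.posDef_iff_dotProduct_mulVec]
    constructor
    · -- Hermitian
      ext i j
      simp only [hV, Matrix.conjTranspose_apply, Matrix.of_apply, star_trivial]
      ring_nf
    · intro x hx
      set y : Fin n → ℝ := fun i => Real.exp (-θ * δ ^ 2 * (i : ℝ) ^ 2) * x i with hy
      have hyne : y ≠ 0 := by
        intro h0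
        apply hx
        funext i
        have := congrFun h0 i
        simp only [hy, Pi.zero_apply] at this
        rcases mul_eq_zero.1 this with h | h
        · exact absurd h (Real.exp_ne_zero _)
        · exact h
      have key : ∀ i j : Fin n,
          x i * (σ ^ 2 * Real.exp (-θ * ((i : ℝ) - (j : ℝ)) ^ 2 * δ ^ 2) * x j)
            = σ ^ 2 * (y i * y j * Real.exp ((2 * θ * δ ^ 2) * (i : ℝ) * (j : ℝ))) := by
        intro i j
        simp only [hy]
        rw [show -θ * ((i : ℝ) - (j : ℝ)) ^ 2 * δ ^ 2
            = (-θ * δ ^ 2 * (i : ℝ) ^ 2) + ((2 * θ * δ ^ 2) * (i : ℝ) * (j : ℝ)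
              + (-θ * δ ^ 2 * (j : ℝ) ^ 2)) by ring, Real.exp_add, Real.exp_add]
        ring
      have hdot : dotProduct (star x) (V *ᵥ x)
          = σ ^ 2 * ∑ i, ∑ j, y i * y j * Real.exp ((2 * θ * δ ^ 2) * (i : ℝ) * (j : ℝ)) := by
        simp only [dotProduct, Matrix.mulVec, Pi.star_apply, star_trivial, hV,
          Matrix.of_apply, Finset.mul_sum]
        exact Finset.sum_congr rfl fun i _ => Finset.sum_congr rfl fun j _ => key i j
      rw [hdot]
      have hc : (0 : ℝ) < 2 * θ * δ ^ 2 := by positivity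
      exact mul_pos (by positivity) (kernel_sum_pos _ hc y hyne)
  refine ⟨hpd.det_pos, ?_⟩
  exact (Matrix.isUnit_iff_isUnit_det _).2 hpd.det_pos.ne'.isUnit
end

section
/- Lemma, Part c (lowest-degree term of the determinant in powers of δ): For fixed n ≥ 1, σ > 0 and θ > 0, the limit as δ → 0⁺ of det(V(δ)) / δ^{n(n−1)} equals σ^{2n} · SF(n−1) · (2θ)^{n(n−1)/2}; equivalently, det(V(δ)) = σ^{2n} SF(n−1) (2θ)^{n(n−1)/2} δ^{n(n−1)} + o(δ^{n(n−1)}) as δ → 0⁺. -/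
/-- The superfactorial `SF(m) = ∏_{k=1}^{m} k!`, with `SF(0) = 1`. -/
def superfactorial (m : ℕ) : ℕ := ∏ k ∈ Finset.Icc 1 m, Nat.factorial k

open Filter Real Finset

lemma superfactorial_eq (m : ℕ) : superfactorial m = Nat.superFactorial m :=
  Nat.prod_Icc_factorial m

/-- slope limit for exp -/
lemma exp_sub_one_div_tendsto (c : ℝ) :
    Tendsto (fun t : ℝ => (Real.exp (c * t) - 1) / t) (nhdsWithin 0 {(0:ℝ)}ᶜ) (nhds c) := by
  have hd : HasDerivAt (fun t : ℝ => Real.exp (c * t)) c 0 := by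
    have h1 : HasDerivAt (fun t : ℝ => c * t) c 0 := by
      simpa using (hasDerivAt_id (0:ℝ)).const_mul c
    simpa [Function.comp_def] using (Real.hasDerivAt_exp (c * 0)).comp 0 h1
  have h := hasDerivAt_iff_tendsto_slope.mp hd
  refine h.congr fun t => ?_
  simp [slope_def_field, Real.exp_zero, div_eq_inv_mul]

lemma sq_tendsto : Tendsto (fun δ : ℝ => δ ^ 2) (nhdsWithin 0 (Set.Ioi 0))
    (nhdsWithin 0 {(0:ℝ)}ᶜ) := by
  rw [tendsto_nhdsWithin_iff]
  constructor
  · have := (continuous_pow 2).tendsto (0 : ℝ)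
    simpa using this.mono_left nhdsWithin_le_nhds
  · filter_upwards [self_mem_nhdsWithin] with δ hδ
    exact pow_ne_zero 2 (ne_of_gt hδ)

/-- Lemma, Part c (lowest-degree term of the determinant in powers of `δ`):
`det (V(δ)) / δ^{n(n-1)} → σ^{2n} · SF(n-1) · (2θ)^{n(n-1)/2}` as `δ → 0⁺`. -/
theorem det_gaussian_cov_leading_term (n : ℕ) (σ θ : ℝ) (hn : 1 ≤ n)
    (hσ : 0 < σ) (hθ : 0 < θ) :
    Filter.Tendsto
      (fun δ : ℝ =>
        (Matrix.of fun i j : Fin n =>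
            σ ^ 2 * Real.exp (-θ * ((i : ℝ) - (j : ℝ)) ^ 2 * δ ^ 2)).det /
          δ ^ (n * (n - 1)))
      (nhdsWithin 0 (Set.Ioi 0))
      (nhds (σ ^ (2 * n) * (superfactorial (n - 1) : ℝ) *
        (2 * θ) ^ (n * (n - 1) / 2))) := by
  obtain ⟨m, rfl⟩ : ∃ m, n = m + 1 := ⟨n - 1, by omega⟩
  set n := m + 1 with hn'
  -- determinant factorization
  have hdet : ∀ δ : ℝ,
      (Matrix.of fun i j : Fin n =>
          σ ^ 2 * Real.exp (-θ * ((i : ℝ) - (j : ℝ)) ^ 2 * δ ^ 2)).det =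
      (∏ i : Fin n, (σ * Real.exp (-θ * (i : ℝ) ^ 2 * δ ^ 2))) ^ 2 *
        ∏ i : Fin n, ∏ j ∈ Finset.Ioi i,
          (Real.exp (2 * θ * (j : ℝ) * δ ^ 2) - Real.exp (2 * θ * (i : ℝ) * δ ^ 2)) := by
    intro δ
    set a : Fin n → ℝ := fun i => σ * Real.exp (-θ * (i : ℝ) ^ 2 * δ ^ 2) with ha
    set v : Fin n → ℝ := fun i => Real.exp (2 * θ * (i : ℝ) * δ ^ 2) with hv
    have hM : (Matrix.of fun i j : Fin n =>
        σ ^ 2 * Real.exp (-θ * ((i : ℝ) - (j : ℝ)) ^ 2 * δ ^ 2)) =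
        Matrix.of fun i j : Fin n => a i * (Matrix.of
          (fun i j : Fin n => a j * Matrix.vandermonde v i j) i j) := by
      ext i j
      simp only [Matrix.of_apply, Matrix.vandermonde_apply, ha, hv]
      rw [← Real.exp_nat_mul]
      have key : Real.exp (-θ * ((i:ℝ) - (j:ℝ)) ^ 2 * δ ^ 2) =
          Real.exp (-θ * (i:ℝ) ^ 2 * δ ^ 2) * Real.exp (-θ * (j:ℝ) ^ 2 * δ ^ 2) *
            Real.exp (((j:ℕ) : ℝ) * (2 * θ * (i:ℝ) * δ ^ 2)) := by
        rw [← Real.exp_add, ← Real.exp_add]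
        congr 1
        push_cast
        ring
      rw [key]; ring
    rw [hM, Matrix.det_mul_column a, Matrix.det_mul_row a, Matrix.det_vandermonde]
    rw [← mul_assoc, ← sq]
  -- cardinality
  set N : ℕ := ∑ i : Fin n, (Finset.Ioi i).card with hN
  have h1 : N = ∑ i ∈ Finset.range n, (n - 1 - i) := by
    rw [hN, ← Fin.sum_univ_eq_sum_range fun i => n - 1 - i]
    exact Finset.sum_congr rfl fun i _ => Fin.card_Ioi i
  have h1' : N = ∑ i ∈ Finset.range n, i := by
    rw [h1, ← Finset.sum_range_reflect (fun i => i) n]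
  have hN2 : n * (n - 1) = 2 * N := by
    have := Finset.sum_range_id_mul_two n
    omega
  have hN1 : n * (n - 1) / 2 = N := by omega
  -- superfactorial via Vandermonde
  have hsf : ∏ i : Fin n, ∏ j ∈ Finset.Ioi i, ((j:ℝ) - (i:ℝ))
      = (Nat.superFactorial m : ℝ) := by
    rw [← Matrix.det_vandermonde_id_eq_superFactorial (R := ℝ) m, Matrix.det_vandermonde]
  -- main limit of the massaged function
  have key : Tendsto (fun δ : ℝ =>
      (∏ i : Fin n, (σ * Real.exp (-θ * (i:ℝ)^2 * δ^2)))^2 *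
      ∏ i : Fin n, ∏ j ∈ Finset.Ioi i,
        ((Real.exp (2*θ*(j:ℝ)*δ^2) - Real.exp (2*θ*(i:ℝ)*δ^2)) / δ^2))
      (nhdsWithin 0 (Set.Ioi 0))
      (nhds ((∏ _i : Fin n, σ)^2 *
        ∏ i : Fin n, ∏ j ∈ Finset.Ioi i, (2*θ*((j:ℝ) - (i:ℝ))))) := by
    apply Tendsto.mul
    · have hc : Continuous fun δ : ℝ =>
          (∏ i : Fin n, (σ * Real.exp (-θ * (i:ℝ)^2 * δ^2)))^2 := by fun_prop
      have := (hc.tendsto 0).mono_left (nhdsWithin_le_nhds (s := Set.Ioi 0))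
      simpa using this
    · apply tendsto_finset_prod
      intro i _
      apply tendsto_finset_prod
      intro j _
      have hj := (exp_sub_one_div_tendsto (2*θ*(j:ℝ))).comp sq_tendsto
      have hi := (exp_sub_one_div_tendsto (2*θ*(i:ℝ))).comp sq_tendsto
      have hsub := hj.sub hi
      have hlim : 2*θ*(j:ℝ) - 2*θ*(i:ℝ) = 2*θ*((j:ℝ) - (i:ℝ)) := by ring
      rw [hlim] at hsub
      refine hsub.congr fun δ => ?_
      simp only [Function.comp_apply]
      ring
  -- eventual equality
  have heq : (fun δ : ℝ =>
      (∏ i : Fin n, (σ * Real.exp (-θ * (i:ℝ)^2 * δ^2)))^2 *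
      ∏ i : Fin n, ∏ j ∈ Finset.Ioi i,
        ((Real.exp (2*θ*(j:ℝ)*δ^2) - Real.exp (2*θ*(i:ℝ)*δ^2)) / δ^2))
      =ᶠ[nhdsWithin 0 (Set.Ioi 0)]
      (fun δ : ℝ =>
        (Matrix.of fun i j : Fin n =>
            σ ^ 2 * Real.exp (-θ * ((i : ℝ) - (j : ℝ)) ^ 2 * δ ^ 2)).det /
          δ ^ (n * (n - 1))) := by
    filter_upwards [self_mem_nhdsWithin] with δ hδ
    have hδ0 : (δ:ℝ) ≠ 0 := ne_of_gt hδ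
    rw [hdet δ]
    have hprod : ∏ i : Fin n, ∏ j ∈ Finset.Ioi i,
        ((Real.exp (2*θ*(j:ℝ)*δ^2) - Real.exp (2*θ*(i:ℝ)*δ^2)) / δ^2)
        = (∏ i : Fin n, ∏ j ∈ Finset.Ioi i,
            (Real.exp (2*θ*(j:ℝ)*δ^2) - Real.exp (2*θ*(i:ℝ)*δ^2))) / (δ^2)^N := by
      rw [hN, ← Finset.prod_pow_eq_pow_sum, ← Finset.prod_div_distrib]
      refine Finset.prod_congr rfl fun i _ => ?_
      rw [Finset.prod_div_distrib, Finset.prod_const]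
    rw [hprod, hN2, pow_mul, mul_div_assoc]
  refine Tendsto.congr' heq ?_
  convert key using 2
  have h2 : ∏ i : Fin n, ∏ j ∈ Finset.Ioi i, (2*θ*((j:ℝ) - (i:ℝ)))
      = (2*θ)^N * ∏ i : Fin n, ∏ j ∈ Finset.Ioi i, ((j:ℝ)-(i:ℝ)) := by
    rw [hN, ← Finset.prod_pow_eq_pow_sum, ← Finset.prod_mul_distrib]
    refine Finset.prod_congr rfl fun i _ => ?_
    rw [← Finset.prod_const, ← Finset.prod_mul_distrib]
  rw [h2, hsf, Finset.prod_const, Finset.card_univ, Fintype.card_fin, ← pow_mul, hN1]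
  have hm : n - 1 = m := by omega
  rw [hm, superfactorial_eq]
  ring
end
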